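/- Let X ∈ ℝ^{n×p}, c ≤ p, and let B* minimize ‖X − XB‖_F over B ∈ ℝ^{p×p} subject to B having at most c nonzero rows. Let I* = {i : B*_{(i)} ≠ 0}. Then ‖X − XB*‖_F = ‖X − X^{I*}(X^{I*})⁺X‖_F; i.e., the optimal row-sparse self-regression coefficient achieves exactly the projection error onto the span of the selected columns. -/

import Mathlib

open Matrix

noncomputable def frob {m n : Type*} [Fintype m] [Fintype n] (A : Matrix m n ℝ) : ℝ :=
  Real.sqrt (∑ i, ∑ j, A i j ^ 2)

def IsMoorePenrose {m n : Type*} [Fintype m] [Fintype n]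
    (A : Matrix m n ℝ) (Ap : Matrix n m ℝ) : Prop :=
  A * Ap * A = A ∧ Ap * A * Ap = Ap ∧ (A * Ap)ᵀ = A * Ap ∧ (Ap * A)ᵀ = Ap * A

def colSub {n p : ℕ} (X : Matrix (Fin n) (Fin p) ℝ) (I : Finset (Fin p)) :
    Matrix (Fin n) ↥I ℝ := Matrix.of fun i j => X i j.1

noncomputable instance decidableRowNeZero {m k : Type*} [Fintype k] (B : Matrix m k ℝ) :
    DecidablePred fun i => B i ≠ 0 := fun i => instDecidableNot

noncomputable def frobSq {m n : Type*} [Fintype m] [Fintype n] (A : Matrix m n ℝ) : ℝ :=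
  ∑ i, ∑ j, A i j ^ 2

lemma frobSq_nonneg {m n : Type*} [Fintype m] [Fintype n] (A : Matrix m n ℝ) :
    0 ≤ frobSq A :=
  Finset.sum_nonneg fun _ _ => Finset.sum_nonneg fun _ _ => sq_nonneg _

lemma frob_le_of_frobSq_le {m n : Type*} [Fintype m] [Fintype n]
    {A B : Matrix m n ℝ} (h : frobSq A ≤ frobSq B) : frob A ≤ frob B :=
  Real.sqrt_le_sqrt h

lemma cross_zero {m k n : Type*} [Fintype m] [Fintype k] [Fintype n]
    (A : Matrix m k ℝ) (R : Matrix m n ℝ) (Z : Matrix k n ℝ) (h : Aᵀ * R = 0) :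
    ∑ i, ∑ j, R i j * (A * Z) i j = 0 := by
  have hRA : Rᵀ * A = 0 := by
    have := congrArg Matrix.transpose h
    simpa [Matrix.transpose_mul] using this
  have key : ∀ j, ∑ i, R i j * (A * Z) i j = ((Rᵀ * A) * Z) j j := by
    intro j
    simp only [Matrix.mul_apply, Matrix.transpose_apply, Finset.sum_mul, Finset.mul_sum]
    rw [Finset.sum_comm]
    exact Finset.sum_congr rfl fun l _ => Finset.sum_congr rfl fun i _ => by ring
  rw [Finset.sum_comm]
  simp [key, hRA]

lemma frobSq_le_orth {m k n : Type*} [Fintype m] [Fintype k] [Fintype n]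
    (A : Matrix m k ℝ) (R : Matrix m n ℝ) (Z : Matrix k n ℝ) (h : Aᵀ * R = 0) :
    frobSq R ≤ frobSq (R + A * Z) := by
  have hc := cross_zero A R Z h
  have hexp : frobSq (R + A * Z)
      = frobSq R + frobSq (A * Z) + 2 * ∑ i, ∑ j, R i j * (A * Z) i j := by
    simp only [frobSq, Matrix.add_apply, add_sq, Finset.sum_add_distrib, Finset.mul_sum]
    ring_nf
  rw [hexp, hc]
  have := frobSq_nonneg (A * Z)
  linarith

/-- The row-sparse matrix realizing `colSub X I * XIp * X`. -/
noncomputable def Cmat {n p : ℕ} (X : Matrix (Fin n) (Fin p) ℝ) (I : Finset (Fin p))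
    (XIp : Matrix ↥I (Fin n) ℝ) : Matrix (Fin p) (Fin p) ℝ :=
  fun k j => if h : k ∈ I then (XIp * X) ⟨k, h⟩ j else 0

lemma Cmat_supp {n p : ℕ} (X : Matrix (Fin n) (Fin p) ℝ) (I : Finset (Fin p))
    (XIp : Matrix ↥I (Fin n) ℝ) {k : Fin p} (hk : Cmat X I XIp k ≠ 0) : k ∈ I := by
  by_contra hkI
  apply hk
  funext j
  simp [Cmat, dif_neg, hkI]

lemma mul_Cmat {n p : ℕ} (X : Matrix (Fin n) (Fin p) ℝ) (I : Finset (Fin p))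
    (XIp : Matrix ↥I (Fin n) ℝ) :
    X * Cmat X I XIp = colSub X I * XIp * X := by
  rw [Matrix.mul_assoc]
  ext i j
  simp only [Matrix.mul_apply]
  have step1 : ∑ k : Fin p, X i k * Cmat X I XIp k j = ∑ k ∈ I, X i k * Cmat X I XIp k j := by
    refine (Finset.sum_subset (Finset.subset_univ I) ?_).symm
    intro k _ hkI
    simp [Cmat, dif_neg, hkI]
  rw [step1, ← Finset.sum_attach I (fun k => X i k * Cmat X I XIp k j), ← Finset.univ_eq_attach]
  refine Finset.sum_congr rfl fun k _ => ?_
  have : Cmat X I XIp k.1 j = (XIp * X) k j := by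
    simp only [Cmat, dif_pos k.2]
  rw [this]
  rfl

lemma sparse_mul {n p : ℕ} (X : Matrix (Fin n) (Fin p) ℝ) (I : Finset (Fin p))
    (B : Matrix (Fin p) (Fin p) ℝ) (hBsupp : ∀ k ∉ I, B k = 0) :
    X * B = colSub X I * (Matrix.of fun (k : ↥I) j => B k.1 j) := by
  ext i j
  simp only [Matrix.mul_apply]
  have step1 : ∑ k : Fin p, X i k * B k j = ∑ k ∈ I, X i k * B k j := by
    refine (Finset.sum_subset (Finset.subset_univ I) ?_).symm
    intro k _ hkI
    rw [hBsupp k hkI]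
    simp
  rw [step1, ← Finset.sum_attach I (fun k => X i k * B k j), ← Finset.univ_eq_attach]
  rfl

lemma dir2_aux {n p : ℕ} (X : Matrix (Fin n) (Fin p) ℝ) (I : Finset (Fin p))
    (B : Matrix (Fin p) (Fin p) ℝ) (hBsupp : ∀ k ∉ I, B k = 0)
    (XIp : Matrix ↥I (Fin n) ℝ) (hMP : IsMoorePenrose (colSub X I) XIp) :
    frob (X - colSub X I * XIp * X) ≤ frob (X - X * B) := by
  obtain ⟨h1, _, h3, _⟩ := hMP
  have hP : (colSub X I)ᵀ * (colSub X I * XIp) = (colSub X I)ᵀ := by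
    conv_lhs => rw [← h3]
    rw [← Matrix.transpose_mul, h1]
  have hAR : (colSub X I)ᵀ * (X - colSub X I * XIp * X) = 0 := by
    rw [Matrix.mul_sub, ← Matrix.mul_assoc, hP, sub_self]
  have hdecomp : X - X * B
      = (X - colSub X I * XIp * X)
        + colSub X I * (XIp * X - Matrix.of fun (k : ↥I) j => B k.1 j) := by
    rw [sparse_mul X I B hBsupp, Matrix.mul_sub, ← Matrix.mul_assoc]
    abel
  apply frob_le_of_frobSq_le
  rw [hdecomp]
  exact frobSq_le_orth _ _ _ hAR

theorem stmt15 {n p : ℕ} (X : Matrix (Fin n) (Fin p) ℝ) (c : ℕ)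
    (B : Matrix (Fin p) (Fin p) ℝ)
    (hfeas : (Finset.univ.filter (fun i => B i ≠ 0)).card ≤ c)
    (hmin : ∀ C : Matrix (Fin p) (Fin p) ℝ,
      (Finset.univ.filter (fun i => C i ≠ 0)).card ≤ c →
        frob (X - X * B) ≤ frob (X - X * C))
    (XIp : Matrix ↥(Finset.univ.filter (fun i => B i ≠ 0)) (Fin n) ℝ)
    (hXIp : IsMoorePenrose (colSub X (Finset.univ.filter (fun i => B i ≠ 0))) XIp) :
    frob (X - X * B)
      = frob (X - colSub X (Finset.univ.filter (fun i => B i ≠ 0)) * XIp * X) := by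
  refine le_antisymm ?_ ?_
  · have hCfeas : (Finset.univ.filter
        (fun i => Cmat X (Finset.univ.filter (fun i => B i ≠ 0)) XIp i ≠ 0)).card ≤ c := by
      refine le_trans (Finset.card_le_card ?_) hfeas
      intro k hk
      simp only [Finset.mem_filter, Finset.mem_univ, true_and] at hk
      exact Cmat_supp X _ XIp hk
    have := hmin _ hCfeas
    rwa [mul_Cmat] at this
  · refine dir2_aux X _ B ?_ XIp hXIp
    intro k hk
    by_contra hne
    exact hk (by simp [hne])
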